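/- Let S be a set of substitutions on a finite alphabet A and s a sequence in S^ω. The set StabUltLet(s) is finite, with cardinality at most the cardinality of A. Moreover there exist a finite prefix p of s and the corresponding suffix s' such that every element u of StabUltLet(s) can be written u = p(α) for some letter α ∈ StabLet(s'). -/

import Mathlib

universe u
variable {A : Type u}

/-- Apply a substitution (given by images of letters) to a finite word. -/
def applyList (f : A → List A) (u : List A) : List A := u.flatMap f

/-- Starting position of the image of the `n`-th letter of `v` inside `f(v)`. -/
def blockStart (f : A → List A) (v : ℕ → A) : ℕ → ℕ
  | 0 => 0
  | n + 1 => blockStart f v n + (f (v n)).length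

/-- `ApplyEq f v u` means `u = f(v)` for right-infinite words. -/
def ApplyEq (f : A → List A) (v u : ℕ → A) : Prop :=
  ∀ (n i : ℕ) (h : i < (f (v n)).length),
    u (blockStart f v n + i) = (f (v n))[i]

/-- `u` occurs as a factor of `w` at position `k`. -/
def FactorAt (w : ℕ → A) (u : List A) (k : ℕ) : Prop :=
  ∀ (i : ℕ) (h : i < u.length), u[i] = w (k + i)

def Factor (w : ℕ → A) (u : List A) : Prop := ∃ k, FactorAt w u k

/-- `u` is a prefix of the infinite word `w`. -/
def PrefixOf (u : List A) (w : ℕ → A) : Prop :=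
  ∀ (i : ℕ) (h : i < u.length), u[i] = w i

/-- Membership in the stable set of a set `S` of substitutions. -/
def InStable (S : Set (A → List A)) (w : ℕ → A) : Prop :=
  ∃ (σ : ℕ → A → List A) (ws : ℕ → ℕ → A),
    (∀ n, σ n ∈ S) ∧ ws 0 = w ∧ ∀ n, ApplyEq (σ n) (ws (n + 1)) (ws n)

/-- Composition `σ_1 ∘ ⋯ ∘ σ_n` of the first `n` substitutions of `s` (0-indexed). -/
def compSeq (s : ℕ → A → List A) : ℕ → A → List A
  | 0 => fun a => [a]
  | n + 1 => fun a => applyList (compSeq s n) (s n a)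

/-- `w` is S-adic with directive sequence `σ`. -/
def SAdicWith (σ : ℕ → A → List A) (w : ℕ → A) : Prop :=
  ∃ a : ℕ → A, (∀ n, PrefixOf (compSeq σ n (a n)) w) ∧
    ∀ N : ℕ, ∃ n, N ≤ (compSeq σ n (a n)).length


/-- Finite nonempty words indefinitely desubstitutable with directive sequence `s`. -/
def StabFin (s : ℕ → A → List A) : Set (List A) :=
  {u | ∃ us : ℕ → List A, us 0 = u ∧ (∀ n, us n ≠ []) ∧
    ∀ n, us n = applyList (s n) (us (n + 1))}

/-- Nonempty concatenations of elements of `X`. -/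
def WPlus (X : Set (List A)) : Set (List A) :=
  {u | ∃ L : List (List A), L ≠ [] ∧ (∀ x ∈ L, x ∈ X) ∧ u = L.flatten}

/-- Elements of `StabFin s` that are not concatenations of two or more
elements of `StabFin s`. -/
def GenStabFin (s : ℕ → A → List A) : Set (List A) :=
  StabFin s \ {u | ∃ x y, x ∈ StabFin s ∧ y ∈ WPlus (StabFin s) ∧ u = x ++ y}

/-- Letters indefinitely desubstitutable along `s`. -/
def StabLet (s : ℕ → A → List A) : Set A :=
  {α | ∃ as : ℕ → A, as 0 = α ∧ ∀ n, s n (as (n + 1)) = [as n]}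

/-- Words of the form `σ_1⋯σ_k(α)` with `α` indefinitely desubstitutable along the
remaining suffix of `s`. -/
def StabUltLet (s : ℕ → A → List A) : Set (List A) :=
  {u | ∃ (k : ℕ) (α : A), α ∈ StabLet (fun n => s (n + k)) ∧ u = compSeq s k α}

lemma stabLet_step (s : ℕ → A → List A) (k : ℕ) {α : A}
    (h : α ∈ StabLet (fun n => s (n + k))) :
    ∃ β ∈ StabLet (fun n => s (n + (k + 1))), compSeq s (k + 1) β = compSeq s k α := by
  obtain ⟨as, h0, h1⟩ := h
  refine ⟨as 1, ⟨fun n => as (n + 1), rfl, fun n => ?_⟩, ?_⟩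
  · have := h1 (n + 1)
    simpa [show n + (k + 1) = n + 1 + k by ring] using this
  · have h2 : s k (as 1) = [α] := by
      have := h1 0
      simp at this
      rw [this, h0]
    show applyList (compSeq s k) (s k (as 1)) = _
    rw [h2]
    simp [applyList]

lemma U_mono (s : ℕ → A → List A) {k m : ℕ} (hkm : k ≤ m) :
    (compSeq s k '' StabLet (fun n => s (n + k))) ⊆
      (compSeq s m '' StabLet (fun n => s (n + m))) := by
  induction m with
  | zero => simpa [Nat.le_zero.mp hkm] using subset_rfl
  | succ m ih =>
    rcases Nat.lt_or_ge k (m + 1) with h | h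
    · refine (ih (Nat.lt_succ_iff.mp h)).trans ?_
      rintro u ⟨α, hα, rfl⟩
      obtain ⟨β, hβ, hcomp⟩ := stabLet_step s m hα
      exact ⟨β, hβ, hcomp⟩
    · simpa [Nat.le_antisymm hkm h] using subset_rfl

/-- `StabUltLet(s)` is finite, of cardinality at most `#A`; moreover a
single prefix `p` of `s` works for all of its elements. -/
theorem stmt8 {A : Type u} [Fintype A] (S : Set (A → List A))
    (hS : ∀ f ∈ S, ∀ a, f a ≠ []) (s : ℕ → A → List A) (hs : ∀ n, s n ∈ S) :
    (StabUltLet s).Finite ∧ (StabUltLet s).ncard ≤ Fintype.card A ∧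
      ∃ k : ℕ, ∀ u ∈ StabUltLet s,
        ∃ α ∈ StabLet (fun n => s (n + k)), u = compSeq s k α := by
  classical
  set U : ℕ → Set (List A) := fun k => compSeq s k '' StabLet (fun n => s (n + k)) with hU
  have hUfin : ∀ k, (U k).Finite := fun k =>
    (Set.toFinite (StabLet (fun n => s (n + k)))).image _
  have hUcard : ∀ k, (U k).ncard ≤ Fintype.card A := by
    intro k
    calc (U k).ncard ≤ (StabLet (fun n => s (n + k))).ncard :=
          Set.ncard_image_le (Set.toFinite _)
      _ ≤ (Set.univ : Set A).ncard :=
          Set.ncard_le_ncard (Set.subset_univ _) Set.finite_univ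
      _ = Fintype.card A := by rw [Set.ncard_univ, Nat.card_eq_fintype_card]
  -- pick k0 maximizing the cardinality
  have hranfin : (Set.range fun k => (U k).ncard).Finite :=
    (Set.finite_Iic (Fintype.card A)).subset (by rintro _ ⟨k, rfl⟩; exact hUcard k)
  obtain ⟨c, ⟨k0, hk0⟩, hmax⟩ :=
    hranfin.exists_maximalFor id _ ⟨_, ⟨0, rfl⟩⟩
  have hk0max : ∀ k, (U k).ncard ≤ (U k0).ncard := by
    intro k
    rcases le_or_gt (U k).ncard (U k0).ncard with h | h
    · exact h
    · subst hk0
      have := hmax ⟨k, rfl⟩ h.le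
      simp only [id] at this
      omega
  have hUk0 : ∀ k, U k ⊆ U k0 := by
    intro k
    have h1 : U k ⊆ U (max k k0) := U_mono s (le_max_left _ _)
    have h2 : U k0 ⊆ U (max k k0) := U_mono s (le_max_right _ _)
    have heq : U k0 = U (max k k0) :=
      Set.eq_of_subset_of_ncard_le h2 (hk0max _) (hUfin _)
    rw [heq]; exact h1
  have hEq : StabUltLet s = U k0 := by
    apply Set.Subset.antisymm
    · rintro u ⟨k, α, hα, rfl⟩
      exact hUk0 k ⟨α, hα, rfl⟩
    · rintro u ⟨α, hα, rfl⟩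
      exact ⟨k0, α, hα, rfl⟩
  refine ⟨hEq ▸ hUfin k0, hEq ▸ hUcard k0, k0, ?_⟩
  intro u hu
  rw [hEq] at hu
  obtain ⟨α, hα, rfl⟩ := hu
  exact ⟨α, hα, rfl⟩
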